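/- Let Q be a rack. The right multiplication group Rmlt(Q) is abelian if and only if Q is both medial and paragraphic. -/
import Mathlib


/-- A (right) rack: a set with a binary operation `mul` such that every right
translation `R_x : y ↦ y * x` is a bijection (with inverse given by the right
division `div`), satisfying right self-distributivity. -/
class RightRack (Q : Type*) where
  mul : Q → Q → Q
  div : Q → Q → Q
  div_mul : ∀ x y : Q, mul (div x y) y = x
  mul_div : ∀ x y : Q, div (mul x y) y = x
  self_distrib : ∀ x y z : Q, mul (mul x y) z = mul (mul x z) (mul y z)

namespace RightRack

/-- The right translation `R_x` as a permutation of `Q`. -/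
def rt {Q : Type*} [RightRack Q] (x : Q) : Equiv.Perm Q where
  toFun y := mul y x
  invFun y := div y x
  left_inv y := mul_div y x
  right_inv y := div_mul y x

/-- The right multiplication group `Rmlt(Q)`: the subgroup of the symmetric group
on `Q` generated by all right translations. -/
def rmlt (Q : Type*) [RightRack Q] : Subgroup (Equiv.Perm Q) :=
  Subgroup.closure (Set.range (rt : Q → Equiv.Perm Q))

end RightRack

open RightRack

/-- A quandle: an idempotent rack. -/
class RightQuandle (Q : Type*) extends RightRack Q where
  idem : ∀ x : Q, mul x x = x

/-- Let `Q` be a rack. The right multiplication group `Rmlt(Q)` is abelian if and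
only if `Q` is both medial (`(x*u)*(v*y) = (x*v)*(u*y)`) and paragraphic
(`x*(y*x) = x*y`). -/
theorem rmlt_abelian_iff_medial_paragraphic {Q : Type*} [RightRack Q] :
    (∀ g ∈ RightRack.rmlt Q, ∀ h ∈ RightRack.rmlt Q, g * h = h * g) ↔
      ((∀ x u v y : Q, RightRack.mul (RightRack.mul x u) (RightRack.mul v y)
          = RightRack.mul (RightRack.mul x v) (RightRack.mul u y)) ∧
        (∀ x y : Q, RightRack.mul x (RightRack.mul y x) = RightRack.mul x y)) := by
  constructor
  · intro H
    -- generators commute: condition K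
    have K : ∀ z x y : Q, mul (mul z x) y = mul (mul z y) x := by
      intro z x y
      have hx : rt x ∈ rmlt Q := Subgroup.subset_closure ⟨x, rfl⟩
      have hy : rt y ∈ rmlt Q := Subgroup.subset_closure ⟨y, rfl⟩
      have h := H (rt y) hy (rt x) hx
      exact congrFun (congrArg (fun e : Equiv.Perm Q => (e : Q → Q)) h) z
    -- condition C : w * (x*y) = w * x
    have C : ∀ w x y : Q, mul w (mul x y) = mul w x := by
      intro w x y
      have hw : mul (div w y) y = w := div_mul w y
      calc mul w (mul x y) = mul (mul (div w y) y) (mul x y) := by rw [hw]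
        _ = mul (mul (div w y) x) y := (self_distrib _ _ _).symm
        _ = mul (mul (div w y) y) x := K _ _ _
        _ = mul w x := by rw [hw]
    refine ⟨fun x u v y => ?_, fun x y => C x y x⟩
    calc mul (mul x u) (mul v y) = mul (mul x u) v := C _ _ _
      _ = mul (mul x v) u := K _ _ _
      _ = mul (mul x v) (mul u y) := (C _ _ _).symm
  · rintro ⟨med, par⟩
    -- key identity: (a*p)*(q*a) = (a*q)*p
    have dag : ∀ a p q : Q, mul (mul a p) (mul q a) = mul (mul a q) p := by
      intro a p q
      have h1 := med a p q (mul a q)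
      rwa [par q a, par (mul a q) p] at h1
    -- generators commute
    have K : ∀ a p q : Q, mul (mul a p) q = mul (mul a q) p := by
      intro a p q
      calc mul (mul a p) q = mul (mul a q) (mul p a) := (dag a q p).symm
        _ = mul (mul a p) (mul q a) := med a q p a
        _ = mul (mul a q) p := dag a p q
    have gen : ∀ x y : Q, rt x * rt y = rt y * rt x := by
      intro x y
      exact Equiv.ext fun z => K z y x
    intro g hg h hh
    refine Subgroup.closure_induction₂ (k := Set.range (rt : Q → Equiv.Perm Q))
      (p := fun a b _ _ => a * b = b * a) ?_ ?_ ?_ ?_ ?_ ?_ ?_ hg hh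
    · rintro _ _ ⟨x, rfl⟩ ⟨y, rfl⟩
      exact gen x y
    · intro x hx; rw [one_mul, mul_one]
    · intro x hx; rw [one_mul, mul_one]
    · intro x y z _ _ _ h1 h2
      rw [mul_assoc, h2, ← mul_assoc, h1, mul_assoc]
    · intro y z x _ _ _ h1 h2
      rw [← mul_assoc, h1, mul_assoc, h2, ← mul_assoc]
    · intro x y _ _ h1
      exact Commute.inv_left h1
    · intro x y _ _ h1
      exact Commute.inv_right h1
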